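/- Let G be a simple graph with n ≥ 2 vertices, m edges and Laplacian eigenvalues μ₁ ≥ … ≥ μ_{n−1} ≥ μₙ = 0. With Υ = trace(L(G)⁴) = Σ_{i=1}^{n−1} μᵢ⁴ and Zg(G) the first Zagreb index, the Laplacian spread satisfies ( (Υ(n−1) − (Zg(G)+2m)²) / ((n−1)(Zg(G)+2m)) )^{1/2} ≤ S_L(G). -/

import Mathlib

open Finset Polynomial

section Aux

open Matrix

private lemma map_one_C_aux {N : Type*} [Fintype N] [DecidableEq N] {R : Type*} [CommRing R] :
    ((1 : Matrix N N R).map (C : R →+* R[X])) = 1 :=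
  Matrix.map_one _ (map_zero C) (map_one C)

private lemma charpoly_conj_aux {N : Type*} [Fintype N] [DecidableEq N] {R : Type*} [CommRing R]
    (U D V : Matrix N N R) (hUV : U * V = 1) :
    (U * D * V).charpoly = D.charpoly := by
  have key : charmatrix (U * D * V) =
      U.map (C : R →+* R[X]) * charmatrix D * V.map (C : R →+* R[X]) := by
    unfold Matrix.charmatrix
    rw [RingHom.mapMatrix_apply, RingHom.mapMatrix_apply, mul_sub, sub_mul]
    congr 1
    · have h1 : (Matrix.scalar N (X : R[X])) = (X : R[X]) • (1 : Matrix N N R[X]) := by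
        rw [scalar_apply, smul_one_eq_diagonal]
      rw [h1, mul_smul_comm, smul_mul_assoc, mul_one, ← Matrix.map_mul, hUV, map_one_C_aux]
    · rw [← Matrix.map_mul, ← Matrix.map_mul]
  unfold Matrix.charpoly
  rw [key, det_mul, det_mul, mul_comm ((U.map (C : R →+* R[X])).det) _, mul_assoc, ← det_mul,
    ← Matrix.map_mul, hUV, map_one_C_aux, det_one, mul_one]

private lemma charpoly_diagonal_aux {N : Type*} [Fintype N] [DecidableEq N] {R : Type*}
    [CommRing R] (d : N → R) : (Matrix.diagonal d).charpoly = ∏ i, (X - C (d i)) := by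
  unfold Matrix.charpoly
  have : charmatrix (Matrix.diagonal d) = Matrix.diagonal (fun i => (X : R[X]) - C (d i)) := by
    ext i j
    by_cases h : i = j
    · subst h; simp
    · simp [h, Matrix.diagonal_apply_ne _ h]
  rw [this, det_diagonal]

private lemma trace_conj_pow_aux {N : Type*} [Fintype N] [DecidableEq N] {R : Type*} [CommRing R]
    (U D V : Matrix N N R) (hVU : V * U = 1) (k : ℕ) :
    Matrix.trace ((U * D * V) ^ k) = Matrix.trace (D ^ k) := by
  cases k with
  | zero => simp
  | succ k =>
    have h : ∀ j : ℕ, (U * D * V) ^ (j + 1) = U * D ^ (j + 1) * V := by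
      intro j
      induction j with
      | zero => simp
      | succ j ih =>
        rw [pow_succ (U * D * V) (j + 1), ih, pow_succ D (j + 1)]
        simp only [mul_assoc]
        rw [← mul_assoc V U, hVU, one_mul]
    rw [h k, Matrix.trace_mul_cycle, hVU, one_mul]

private lemma lap_spectrum_aux {n : ℕ} (G : SimpleGraph (Fin n)) [DecidableRel G.Adj] :
    ∃ ν : Fin n → ℝ, (∀ i, 0 ≤ ν i) ∧
      (G.lapMatrix ℝ).charpoly = ∏ i, (X - C (ν i)) ∧
      (∀ k, Matrix.trace ((G.lapMatrix ℝ) ^ k) = ∑ i, ν i ^ k) ∧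
      (G.lapMatrix ℝ).det = ∏ i, ν i := by
  have hPSD := SimpleGraph.posSemidef_lapMatrix ℝ G
  have hL : (G.lapMatrix ℝ).IsHermitian := hPSD.1
  refine ⟨hL.eigenvalues, fun i => hPSD.eigenvalues_nonneg i, ?_, ?_, ?_⟩
  · have hspec := hL.spectral_theorem
    have hco : (RCLike.ofReal ∘ hL.eigenvalues : Fin n → ℝ) = hL.eigenvalues := by
      funext i; simp
    rw [hco] at hspec
    conv_lhs => rw [hspec, Unitary.conjStarAlgAut_apply]
    rw [charpoly_conj_aux _ _ _ (Unitary.coe_mul_star_self _), charpoly_diagonal_aux]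
  · intro k
    have hspec := hL.spectral_theorem
    have hco : (RCLike.ofReal ∘ hL.eigenvalues : Fin n → ℝ) = hL.eigenvalues := by
      funext i; simp
    rw [hco] at hspec
    conv_lhs => rw [hspec, Unitary.conjStarAlgAut_apply]
    rw [trace_conj_pow_aux _ _ _ (Unitary.coe_star_mul_self _), Matrix.diagonal_pow,
      Matrix.trace_diagonal]
    simp [Pi.pow_apply]
  · have := hL.det_eq_prod_eigenvalues
    simpa using this

private lemma eig_multiset_aux {n : ℕ} (μ ν : Fin n → ℝ)
    (h : (∏ i, (X - C (μ i))) = ∏ i, (X - C (ν i))) :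
    Multiset.map μ Finset.univ.val = Multiset.map ν Finset.univ.val := by
  have r : ∀ f : Fin n → ℝ, (∏ i, (X - C (f i))).roots = Multiset.map f Finset.univ.val := by
    intro f
    rw [Finset.prod_eq_multiset_prod]
    rw [show Multiset.map (fun i => X - C (f i)) Finset.univ.val
        = Multiset.map (fun a => X - C a) (Multiset.map f Finset.univ.val) by
      rw [Multiset.map_map]; rfl]
    exact roots_multiset_prod_X_sub_C _
  rw [← r μ, ← r ν, h]

private lemma sum_fun_eq_aux {n : ℕ} {μ ν : Fin n → ℝ}
    (h : Multiset.map μ Finset.univ.val = Multiset.map ν Finset.univ.val) (f : ℝ → ℝ) :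
    ∑ i, f (μ i) = ∑ i, f (ν i) := by
  have h2 : (Multiset.map f (Multiset.map μ Finset.univ.val)).sum
      = (Multiset.map f (Multiset.map ν Finset.univ.val)).sum := by rw [h]
  simpa [Multiset.map_map, Finset.sum, Function.comp_def] using h2

private lemma trace_sq_aux {n : ℕ} (G : SimpleGraph (Fin n)) [DecidableRel G.Adj] :
    Matrix.trace ((G.lapMatrix ℝ) ^ 2)
      = (∑ v : Fin n, ((G.degree v : ℝ))^2) + ∑ v : Fin n, (G.degree v : ℝ) := by
  rw [pow_two]
  have hentry : ∀ i j : Fin n, G.lapMatrix ℝ i j =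
      (if i = j then (G.degree i : ℝ) else 0) - (if G.Adj i j then 1 else 0) := by
    intro i j
    by_cases h : i = j
    · subst h
      simp [SimpleGraph.lapMatrix, SimpleGraph.degMatrix]
    · simp [SimpleGraph.lapMatrix, SimpleGraph.degMatrix, Matrix.diagonal_apply_ne _ h, h]
  have key : ∀ i j : Fin n, G.lapMatrix ℝ i j * G.lapMatrix ℝ j i =
      (if i = j then ((G.degree i : ℝ))^2 else 0) + (if G.Adj i j then 1 else 0) := by
    intro i j
    rw [hentry i j, hentry j i]
    by_cases h : i = j
    · subst h
      have hna : ¬ G.Adj i i := G.loopless.irrefl i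
      simp only [if_pos rfl, if_neg hna, eq_self_iff_true, if_true]
      ring
    · have h' : ¬ j = i := fun e => h e.symm
      by_cases ha : G.Adj i j
      · have ha' : G.Adj j i := ha.symm
        simp only [if_neg h, if_neg h', if_pos ha, if_pos ha']
        ring
      · have ha' : ¬ G.Adj j i := fun e => ha e.symm
        simp only [if_neg h, if_neg h', if_neg ha, if_neg ha']
        ring
  rw [Matrix.trace]
  simp only [Matrix.diag_apply, Matrix.mul_apply]
  rw [Finset.sum_congr rfl (fun i _ => Finset.sum_congr rfl (fun j _ => key i j))]
  simp only [Finset.sum_add_distrib]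
  congr 1
  · apply Finset.sum_congr rfl
    intro i _
    rw [Finset.sum_ite_eq]
    simp
  · apply Finset.sum_congr rfl
    intro i _
    exact (SimpleGraph.degree_eq_sum_if_adj G i).symm

private lemma key_ineq_aux {n : ℕ} (hn : 2 ≤ n) (μ : Fin n → ℝ)
    (hmono : ∀ i j : Fin n, i ≤ j → μ j ≤ μ i) (hnn : ∀ i, 0 ≤ μ i)
    (hlast : μ ⟨n - 1, by omega⟩ = 0) :
    (∑ i, μ i ^ 4) * ((n : ℝ) - 1) - (∑ i, μ i ^ 2) ^ 2
      ≤ ((n : ℝ) - 1) * (∑ i, μ i ^ 2) * (μ ⟨0, by omega⟩ - μ ⟨n - 2, by omega⟩) ^ 2 := by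
  set last : Fin n := ⟨n - 1, by omega⟩ with hlastdef
  set a : ℝ := μ ⟨n - 2, by omega⟩ with hadef
  set b : ℝ := μ ⟨0, by omega⟩ with hbdef
  set P : Finset (Fin n) := Finset.univ.erase last with hPdef
  have hb : ∀ i : Fin n, μ i ≤ b := fun i => hmono ⟨0, by omega⟩ i (by
    rw [Fin.le_def]; exact Nat.zero_le _)
  have ha : ∀ i ∈ P, a ≤ μ i := by
    intro i hi
    have hne : i ≠ last := (Finset.mem_erase.1 hi).1
    have hval : i.val ≤ n - 2 := by
      have h1 := i.isLt
      have h2 : i.val ≠ n - 1 := fun e => hne (Fin.ext e)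
      omega
    exact hmono i ⟨n - 2, by omega⟩ (by rw [Fin.le_def]; exact hval)
  have ha0 : 0 ≤ a := hnn _
  have hsplit2 : ∑ i, μ i ^ 2 = ∑ i ∈ P, μ i ^ 2 := by
    have e := Finset.add_sum_erase Finset.univ (fun x => μ x ^ 2) (Finset.mem_univ last)
    simp only [hlast] at e
    rw [hPdef]
    linarith [e]
  have hsplit4 : ∑ i, μ i ^ 4 = ∑ i ∈ P, μ i ^ 4 := by
    have e := Finset.add_sum_erase Finset.univ (fun x => μ x ^ 4) (Finset.mem_univ last)
    simp only [hlast] at e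
    rw [hPdef]
    linarith [e]
  have hcard : (P.card : ℝ) = (n : ℝ) - 1 := by
    rw [hPdef, Finset.card_erase_of_mem (Finset.mem_univ last), Finset.card_univ,
      Fintype.card_fin]
    have : (1:ℕ) ≤ n := by omega
    push_cast [Nat.cast_sub this]
    ring
  set c : ℝ := a * b with hcdef
  have h1 : ∑ i ∈ P, (μ i ^ 2 - c) ^ 2 ≤ (b - a) ^ 2 * ∑ i ∈ P, μ i ^ 2 := by
    rw [Finset.mul_sum]
    apply Finset.sum_le_sum
    intro i hi
    have hai := ha i hi
    have hbi := hb i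
    have e1 : 0 ≤ (b - μ i) * (μ i + a) := mul_nonneg (by linarith) (by linarith [hnn i])
    have e2 : 0 ≤ (μ i + b) * (μ i - a) := mul_nonneg (by linarith [hnn i]) (by linarith)
    nlinarith [mul_nonneg e1 e2]
  have h2 : ∑ i ∈ P, (μ i ^ 2 - c) ^ 2
      = (∑ i ∈ P, μ i ^ 4) - 2 * c * (∑ i ∈ P, μ i ^ 2) + (P.card : ℝ) * c ^ 2 := by
    have hcong : ∀ i ∈ P, (μ i ^ 2 - c) ^ 2 = (μ i ^ 4 - 2 * c * μ i ^ 2) + c ^ 2 := by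
      intro i _
      ring
    rw [Finset.sum_congr rfl hcong, Finset.sum_add_distrib, Finset.sum_sub_distrib,
      ← Finset.mul_sum, Finset.sum_const, nsmul_eq_mul]
  rw [hsplit2, hsplit4, hcard] at *
  set s2 : ℝ := ∑ i ∈ P, μ i ^ 2
  set s4 : ℝ := ∑ i ∈ P, μ i ^ 4
  have hn1 : (0:ℝ) ≤ (n:ℝ) - 1 := by
    have : (2:ℝ) ≤ n := by exact_mod_cast hn
    linarith
  nlinarith [mul_le_mul_of_nonneg_left h1 hn1, sq_nonneg (((n:ℝ) - 1) * c - s2)]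

end Aux

/-- `μ` is the (weakly decreasing) sequence of eigenvalues of the Laplacian matrix of `G`:
it is antitone and the characteristic polynomial of `L(G)` is `∏ i (x - μ i)`. -/
def IsLapEigSeq {n : ℕ} (G : SimpleGraph (Fin n)) [DecidableRel G.Adj]
    (μ : Fin n → ℝ) : Prop :=
  (∀ i j : Fin n, i ≤ j → μ j ≤ μ i) ∧
    (G.lapMatrix ℝ).charpoly = ∏ i : Fin n, (X - C (μ i))

/-- with `Υ = trace(L(G)⁴)` and `Zg(G)` the first Zagreb index, for a graph
with `n ≥ 2` vertices and `m ≥ 1` edges,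
`√((Υ(n-1) - (Zg+2m)²)/((n-1)(Zg+2m))) ≤ S_L(G)`. -/
theorem sqrt_bound_le_laplacianSpread
    {n : ℕ} (hn : 2 ≤ n) (G : SimpleGraph (Fin n)) [DecidableRel G.Adj]
    (m : ℕ) (hm : G.edgeFinset.card = m) (hm0 : 0 < m)
    (μ : Fin n → ℝ) (hμ : IsLapEigSeq G μ) :
    Real.sqrt
        ((Matrix.trace ((G.lapMatrix ℝ) ^ 4) * ((n : ℝ) - 1)
            - ((∑ v : Fin n, (G.degree v : ℝ) ^ 2) + 2 * (m : ℝ)) ^ 2)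
          / (((n : ℝ) - 1) * ((∑ v : Fin n, (G.degree v : ℝ) ^ 2) + 2 * (m : ℝ))))
      ≤ μ ⟨0, by omega⟩ - μ ⟨n - 2, by omega⟩ := by
  obtain ⟨hmono, hchar⟩ := hμ
  obtain ⟨ν, hνnn, hνchar, hνtr, hνdet⟩ := lap_spectrum_aux G
  have hms : Multiset.map μ Finset.univ.val = Multiset.map ν Finset.univ.val :=
    eig_multiset_aux μ ν (hchar.symm.trans hνchar)
  have hsum := fun f => sum_fun_eq_aux hms f
  have hnn : ∀ i, 0 ≤ μ i := by
    intro i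
    have hmem : μ i ∈ Multiset.map ν Finset.univ.val := by
      rw [← hms]
      exact Multiset.mem_map_of_mem μ (Finset.mem_def.mp (Finset.mem_univ i))
    obtain ⟨j, _, hj⟩ := Multiset.mem_map.1 hmem
    exact hj ▸ hνnn j
  have hdet0 : (G.lapMatrix ℝ).det = 0 := by
    rw [← Matrix.exists_mulVec_eq_zero_iff]
    refine ⟨fun _ => 1, ?_, G.lapMatrix_mulVec_const_eq_zero⟩
    intro hcon
    have h1 : (1:ℝ) = 0 := congrFun hcon ⟨0, by omega⟩
    norm_num at h1
  have hlast : μ ⟨n - 1, by omega⟩ = 0 := by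
    have hex : ∃ i, μ i = 0 := by
      rw [hνdet] at hdet0
      obtain ⟨j, _, hj⟩ := Finset.prod_eq_zero_iff.1 hdet0
      have hmem : ν j ∈ Multiset.map μ Finset.univ.val := by
        rw [hms]
        exact Multiset.mem_map_of_mem ν (Finset.mem_def.mp (Finset.mem_univ j))
      obtain ⟨i, _, hi⟩ := Multiset.mem_map.1 hmem
      exact ⟨i, hi.trans hj⟩
    obtain ⟨i, hi⟩ := hex
    have h1 : μ ⟨n - 1, by omega⟩ ≤ μ i := by
      apply hmono i ⟨n - 1, by omega⟩
      rw [Fin.le_def]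
      have := i.isLt
      simp only
      omega
    rw [hi] at h1
    exact le_antisymm h1 (hnn _)
  have hdeg : ∑ v : Fin n, (G.degree v : ℝ) = 2 * (m:ℝ) := by
    have hds := SimpleGraph.sum_degrees_eq_twice_card_edges G
    rw [hm] at hds
    calc ∑ v : Fin n, (G.degree v : ℝ) = ((∑ v : Fin n, G.degree v : ℕ) : ℝ) := by push_cast; rfl
      _ = ((2 * m : ℕ) : ℝ) := by rw [hds]
      _ = 2 * (m:ℝ) := by push_cast; ring
  have hT : (∑ v : Fin n, (G.degree v : ℝ)^2) + 2*(m:ℝ) = ∑ i, μ i ^ 2 := by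
    have h2 : Matrix.trace ((G.lapMatrix ℝ)^2) = ∑ i, ν i ^ 2 := hνtr 2
    have h2' := trace_sq_aux G
    have h2'' := hsum (fun x => x^2)
    linarith
  have hY : Matrix.trace ((G.lapMatrix ℝ)^4) = ∑ i, μ i ^ 4 := by
    rw [hνtr 4]
    exact (hsum (fun x => x^4)).symm
  have hkey := key_ineq_aux hn μ hmono hnn hlast
  have hTpos : 0 < ∑ i, μ i ^ 2 := by
    rw [← hT]
    have h1 : (0:ℝ) ≤ ∑ v : Fin n, (G.degree v:ℝ)^2 :=
      Finset.sum_nonneg fun _ _ => sq_nonneg _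
    have h2 : (1:ℝ) ≤ m := by exact_mod_cast hm0
    linarith
  have hn1 : (0:ℝ) < (n:ℝ) - 1 := by
    have : (2:ℝ) ≤ n := by exact_mod_cast hn
    linarith
  have hS : 0 ≤ μ ⟨0, by omega⟩ - μ ⟨n - 2, by omega⟩ := by
    rw [sub_nonneg]
    exact hmono ⟨0, by omega⟩ ⟨n - 2, by omega⟩ (by rw [Fin.le_def]; exact Nat.zero_le _)
  rw [hY, hT]
  have hdiv : ((∑ i, μ i ^ 4) * ((n:ℝ) - 1) - (∑ i, μ i ^ 2) ^ 2)
      / (((n:ℝ) - 1) * (∑ i, μ i ^ 2))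
      ≤ (μ ⟨0, by omega⟩ - μ ⟨n - 2, by omega⟩) ^ 2 := by
    rw [div_le_iff₀ (by positivity)]
    nlinarith [hkey]
  calc Real.sqrt _ ≤ Real.sqrt ((μ ⟨0, by omega⟩ - μ ⟨n - 2, by omega⟩) ^ 2) :=
        Real.sqrt_le_sqrt hdiv
    _ = μ ⟨0, by omega⟩ - μ ⟨n - 2, by omega⟩ := Real.sqrt_sq hS
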